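/- For each fixed t₀ ∈ [0,1], the set of elements h of G^{[0,1]} that are continuous at t₀ is contained in a measurable set of ν-measure zero, where ν is the product of Haar probability measures. -/

import Mathlib

open MeasureTheory Filter

lemma exists_seq_inj_tendsto (t₀ : Set.Icc (0:ℝ) 1) :
    ∃ t : ℕ → Set.Icc (0:ℝ) 1, Function.Injective t ∧
      Tendsto t atTop (nhds t₀) := by
  set c : ℝ := if (t₀ : ℝ) ≤ 1/2 then 1 else -1 with hc
  have hc0 : c ≠ 0 := by
    rw [hc]; split_ifs <;> norm_num
  have hmem : ∀ n : ℕ, (t₀ : ℝ) + c / (n + 2) ∈ Set.Icc (0:ℝ) 1 := by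
    intro n
    have h2 : (0:ℝ) < (n:ℝ) + 2 := by positivity
    have hle : 1 / ((n:ℝ) + 2) ≤ 1/2 := by
      rw [div_le_div_iff₀ h2 (by norm_num)]
      have hn : (0:ℝ) ≤ (n:ℝ) := Nat.cast_nonneg n
      nlinarith
    have hpos : 0 < 1 / ((n:ℝ) + 2) := by positivity
    have ht0 := t₀.2
    simp only [Set.mem_Icc] at ht0 ⊢
    rcases le_or_gt (t₀ : ℝ) (1/2) with h | h
    · simp only [hc, if_pos h]
      constructor <;> nlinarith [ht0.1, ht0.2]
    · simp only [hc, if_neg (not_le.mpr h), neg_div, ← one_div]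
      constructor <;> nlinarith [ht0.1, ht0.2]
  refine ⟨fun n => ⟨(t₀ : ℝ) + c / (n + 2), hmem n⟩, ?_, ?_⟩
  · intro m n hmn
    have h : c / ((m:ℝ) + 2) = c / ((n:ℝ) + 2) := by
      have := congrArg (fun x : Set.Icc (0:ℝ) 1 => (x : ℝ)) hmn
      simpa using this
    have h2m : ((m:ℝ) + 2) ≠ 0 := by positivity
    have h2n : ((n:ℝ) + 2) ≠ 0 := by positivity
    rw [div_eq_div_iff h2m h2n] at h
    have h3 := mul_left_cancel₀ hc0 h
    have h' : (m:ℝ) = (n:ℝ) := by linarith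
    exact_mod_cast h'
  · rw [tendsto_subtype_rng]
    have h1 : Tendsto (fun n : ℕ => c / ((n:ℝ) + 2)) atTop (nhds 0) := by
      apply Tendsto.div_atTop tendsto_const_nhds
      exact tendsto_atTop_add_const_right _ 2 tendsto_natCast_atTop_atTop
    simpa using tendsto_const_nhds.add h1


lemma exists_cover_small {G : Type*} [Group G] [TopologicalSpace G]
    [IsTopologicalGroup G] [CompactSpace G] [T2Space G]
    [Nontrivial G] [MeasurableSpace G] [BorelSpace G]
    (μ₀ : Measure G) [μ₀.IsHaarMeasure] [IsProbabilityMeasure μ₀] :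
    ∃ (S : Finset G) (W : G → Set G), (∀ j, IsOpen (W j)) ∧ (∀ j, μ₀ (W j) < 1) ∧
      (Set.univ : Set G) ⊆ ⋃ j ∈ S, W j := by
  have key : ∀ x : G, ∃ W : Set G, IsOpen W ∧ x ∈ W ∧ μ₀ W < 1 := by
    intro x
    obtain ⟨y, hy⟩ := exists_ne x
    have hopen : ({y}ᶜ : Set G) ∈ nhds x := by
      exact (isOpen_compl_singleton).mem_nhds (by simpa using hy.symm)
    obtain ⟨K, hK, hKc, hKs⟩ := exists_mem_nhds_isClosed_subset hopen
    refine ⟨interior K, isOpen_interior, mem_interior_iff_mem_nhds.mpr hK, ?_⟩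
    have hKm : MeasurableSet K := hKc.measurableSet
    have hKcomp : 0 < μ₀ Kᶜ := by
      refine (hKc.isOpen_compl).measure_pos μ₀ ⟨y, ?_⟩
      intro hyK; exact (hKs hyK) rfl
    have hsum : μ₀ K + μ₀ Kᶜ = 1 := by
      rw [measure_add_measure_compl hKm, measure_univ]
    have hKlt : μ₀ K < 1 := by
      rw [← hsum]
      exact ENNReal.lt_add_right (measure_ne_top μ₀ K) hKcomp.ne'
    exact lt_of_le_of_lt (measure_mono interior_subset) hKlt
  choose W hWo hWx hWlt using key
  obtain ⟨S, hS⟩ := isCompact_univ.elim_finite_subcover W hWo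
    (fun x _ => Set.mem_iUnion.mpr ⟨x, hWx x⟩)
  exact ⟨S, W, hWo, hWlt, hS⟩

/-- Let `G` be a compact Hausdorff second countable topological group with more
than one element, `μ₀` its normalized Haar probability measure, and `ν` the
infinite product measure on `G^[0,1]` (an independent copy of `μ₀` at each
point of `[0,1]`, characterized by its values on cylinder sets). Then, for each
fixed `t₀ ∈ [0,1]`, the set of `h ∈ G^[0,1]` that are continuous at `t₀` is
contained in a measurable set of `ν`-measure zero. -/
theorem continuousAt_contained_in_null {G : Type*} [Group G] [TopologicalSpace G]
    [IsTopologicalGroup G] [CompactSpace G] [T2Space G] [SecondCountableTopology G]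
    [Nontrivial G] [MeasurableSpace G] [BorelSpace G]
    (μ₀ : Measure G) [μ₀.IsHaarMeasure] [IsProbabilityMeasure μ₀]
    (ν : Measure (Set.Icc (0 : ℝ) 1 → G))
    (hν : ∀ (s : Finset (Set.Icc (0 : ℝ) 1)) (B : Set.Icc (0 : ℝ) 1 → Set G),
      (∀ i ∈ s, MeasurableSet (B i)) →
      ν {h : Set.Icc (0 : ℝ) 1 → G | ∀ i ∈ s, h i ∈ B i} = ∏ i ∈ s, μ₀ (B i))
    (t₀ : Set.Icc (0 : ℝ) 1) :
    ∃ N : Set (Set.Icc (0 : ℝ) 1 → G), MeasurableSet N ∧ ν N = 0 ∧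
      {h : Set.Icc (0 : ℝ) 1 → G | ContinuousAt h t₀} ⊆ N := by
  obtain ⟨t, htinj, httend⟩ := exists_seq_inj_tendsto t₀
  obtain ⟨S, W, hWo, hWlt, hScov⟩ := exists_cover_small μ₀
  -- tail events
  set E : G → ℕ → Set (Set.Icc (0 : ℝ) 1 → G) :=
    fun j m => {h | ∀ n, m ≤ n → h (t n) ∈ W j} with hE
  have hEmeas : ∀ j m, MeasurableSet (E j m) := by
    intro j m
    have : E j m = ⋂ n, ⋂ (_ : m ≤ n), (fun h : Set.Icc (0:ℝ) 1 → G => h (t n)) ⁻¹' (W j) := by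
      ext h; simp [hE, Set.mem_iInter]
    rw [this]
    exact MeasurableSet.iInter fun n => MeasurableSet.iInter fun _ =>
      (measurable_pi_apply (t n)) ((hWo j).measurableSet)
  have hEnull : ∀ j m, ν (E j m) = 0 := by
    intro j m
    have hle : ∀ M : ℕ, ν (E j m) ≤ μ₀ (W j) ^ (M + 1) := by
      intro M
      set s : Finset (Set.Icc (0:ℝ) 1) := (Finset.Icc m (m + M)).image t with hs
      have hsub : E j m ⊆ {h | ∀ i ∈ s, h i ∈ W j} := by
        intro h hh i hi
        simp only [hs, Finset.mem_image, Finset.mem_Icc] at hi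
        obtain ⟨n, ⟨hn1, _⟩, rfl⟩ := hi
        exact hh n hn1
      have hcard : s.card = M + 1 := by
        rw [hs, Finset.card_image_of_injective _ htinj, Nat.card_Icc]
        omega
      calc ν (E j m) ≤ ν {h | ∀ i ∈ s, h i ∈ W j} := measure_mono hsub
        _ = ∏ _i ∈ s, μ₀ (W j) := hν s (fun _ => W j) (fun _ _ => (hWo j).measurableSet)
        _ = μ₀ (W j) ^ (M + 1) := by rw [Finset.prod_const, hcard]
    have htend : Tendsto (fun M : ℕ => μ₀ (W j) ^ (M + 1)) atTop (nhds 0) := by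
      have := ENNReal.tendsto_pow_atTop_nhds_zero_of_lt_one (hWlt j)
      exact this.comp (tendsto_add_atTop_nat 1)
    exact le_antisymm (ge_of_tendsto' htend hle) (zero_le')
  refine ⟨⋃ j ∈ S, ⋃ m : ℕ, E j m, ?_, ?_, ?_⟩
  · exact S.measurableSet_biUnion fun j _ => MeasurableSet.iUnion fun m => hEmeas j m
  · refine measure_biUnion_null_iff S.countable_toSet |>.mpr fun j _ => ?_
    exact measure_iUnion_null fun m => hEnull j m
  · intro h hh
    have hconv : Tendsto (fun n => h (t n)) atTop (nhds (h t₀)) :=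
      (hh.tendsto).comp httend
    obtain ⟨j, hjS, hj⟩ := by
      have := hScov (Set.mem_univ (h t₀))
      simpa using this
    have hev : ∀ᶠ n in atTop, h (t n) ∈ W j :=
      hconv.eventually_mem ((hWo j).mem_nhds hj)
    obtain ⟨m, hm⟩ := eventually_atTop.mp hev
    exact Set.mem_biUnion hjS (Set.mem_iUnion.mpr ⟨m, fun n hn => hm n hn⟩)
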